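/- Let n be a finite-dimensional real Lie algebra that is 2-step nilpotent with center z, equipped with a positive-definite inner product ⟨·,·⟩; set v = z^⊥ and assume v ≠ {0}, and let j(z) : v → v be defined by ⟨[x,y], z⟩ = ⟨y, j(z)x⟩ for x, y ∈ v. Suppose that for every nonzero a ∈ z there is a real number λ(a) < 0 with j(a)² = λ(a)·Id_v (Lauret's modified H-type condition). Then there exists a symmetric bilinear form Λ on z that is negative definite and satisfies j(a)² = Λ(a, a)·Id_v for all a ∈ z; in particular λ extends to a nondegenerate, negative-definite quadratic form on z. -/

import Mathlib

/-- In the Riemannian case, Lauret's modified H-type condition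
(for every nonzero a ∈ 𝔷 there is λ(a) < 0 with j(a)² = λ(a)·Id) implies that λ
comes from a negative-definite symmetric bilinear form Λ on 𝔷, i.e. λ extends to a
nondegenerate negative-definite quadratic form. -/
theorem lauret_modified_H_type_quadratic
    {n : Type*} [LieRing n] [LieAlgebra ℝ n] [FiniteDimensional ℝ n]
    (B : LinearMap.BilinForm ℝ n)
    (hBsymm : ∀ a b : n, B a b = B b a)
    (hBpos : ∀ a : n, a ≠ 0 → 0 < B a a)
    (Z : Submodule ℝ n)
    (hZ : Z = LieSubmodule.toSubmodule (LieAlgebra.center ℝ n))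
    (h2step : ∀ a b : n, ⁅a, b⁆ ∈ Z)
    (V : Submodule ℝ n)
    (hV : V = B.orthogonal Z)
    (hVne : V ≠ ⊥)
    (j : Z →ₗ[ℝ] V →ₗ[ℝ] V)
    (hj : ∀ (z : Z) (x y : V), B ⁅(x : n), (y : n)⁆ (z : n) = B (y : n) ((j z x : V) : n))
    (hL : ∀ a : Z, a ≠ 0 → ∃ lam : ℝ, lam < 0 ∧
      (j a) ∘ₗ (j a) = lam • (LinearMap.id : V →ₗ[ℝ] V)) :
    ∃ Λ : LinearMap.BilinForm ℝ Z,
      (∀ a b : Z, Λ a b = Λ b a) ∧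
      (∀ a : Z, a ≠ 0 → Λ a a < 0) ∧
      (∀ a : Z, (j a) ∘ₗ (j a) = (Λ a a) • (LinearMap.id : V →ₗ[ℝ] V)) := by
  classical
  set d : ℕ := Module.finrank ℝ V with hd
  have hVnt : Nontrivial V := Submodule.nontrivial_iff_ne_bot.mpr hVne
  have hdpos : 0 < d := Module.finrank_pos
  have hdne : (d : ℝ) ≠ 0 := by exact_mod_cast hdpos.ne'
  set Λ : LinearMap.BilinForm ℝ Z :=
    LinearMap.mk₂ ℝ (fun a b => (d : ℝ)⁻¹ * LinearMap.trace ℝ V ((j a) ∘ₗ (j b)))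
      (by intro a a' b
          simp only [map_add, LinearMap.add_comp, map_add]
          ring)
      (by intro c a b
          simp only [map_smul, LinearMap.smul_comp, map_smul, smul_eq_mul]
          ring)
      (by intro a b b'
          simp only [map_add, LinearMap.comp_add, map_add]
          ring)
      (by intro c a b
          simp only [map_smul, LinearMap.comp_smul, map_smul, smul_eq_mul]
          ring) with hΛ
  have hΛapp : ∀ a b : Z, Λ a b = (d : ℝ)⁻¹ * LinearMap.trace ℝ V ((j a) ∘ₗ (j b)) := by
    intro a b; rfl
  have hdiag : ∀ a : Z, a ≠ 0 → ∃ lam : ℝ, lam < 0 ∧ Λ a a = lam ∧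
      (j a) ∘ₗ (j a) = lam • (LinearMap.id : V →ₗ[ℝ] V) := by
    intro a ha
    obtain ⟨lam, hlam, heq⟩ := hL a ha
    refine ⟨lam, hlam, ?_, heq⟩
    rw [hΛapp, heq]
    rw [LinearMap.map_smul, LinearMap.trace_id]
    simp [smul_eq_mul]
    field_simp
    rw [hd]; ring
  refine ⟨Λ, ?_, ?_, ?_⟩
  · intro a b
    rw [hΛapp, hΛapp]
    congr 1
    simp only [← Module.End.mul_eq_comp]
    exact LinearMap.trace_mul_comm ℝ (j a) (j b)
  · intro a ha
    obtain ⟨lam, hlam, hΛaa, _⟩ := hdiag a ha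
    rw [hΛaa]; exact hlam
  · intro a
    by_cases ha : a = 0
    · subst ha
      simp [hΛapp]
    · obtain ⟨lam, _, hΛaa, heq⟩ := hdiag a ha
      rw [hΛaa]; exact heq
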